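/- For integers n > r ≥ 3, let p(n) denote the number of r-subsets I of [n] such that, writing {a < b < c} for the three smallest elements of I, there exist d < e < f in [n] \ I with a < d, b < e, c < f. Then p satisfies the recursion p(n) = Σ_{i=1}^{n−r} i·C(n−2−i, r−3) − (r−2) + p(n−1) with p(r+2) = 0, and consequently p(n) = C(n, r) − C(n, 2) for all n ≥ r+2. -/

import Mathlib

lemma filter_le_sort_get (S : Finset ℕ) (k : ℕ) (hk : k < S.card) :
    (S.filter (fun x => x ≤ (S.sort (· ≤ ·)).get ⟨k, by rwa [Finset.length_sort]⟩)).card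
      = k + 1 := by
  set L := S.sort (· ≤ ·) with hL
  have hlen : L.length = S.card := Finset.length_sort _
  have hk' : k < L.length := by omega
  have hs : L.SortedLT := Finset.sortedLT_sort S
  have hmono := hs.strictMono_get
  have key : S.filter (fun x => x ≤ L.get ⟨k, hk'⟩) = (L.take (k+1)).toFinset := by
    ext x
    simp only [Finset.mem_filter, List.mem_toFinset, List.mem_take_iff_getElem]
    constructor
    · rintro ⟨hxS, hxle⟩
      have hxL : x ∈ L := (Finset.mem_sort _).2 hxS
      obtain ⟨i, hi, hgi⟩ := List.getElem_of_mem hxL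
      refine ⟨i, ?_, hgi⟩
      have : i ≤ k := by
        by_contra hik
        have h2 : L.get ⟨k, hk'⟩ < L.get ⟨i, hi⟩ := hmono (by simp; omega)
        rw [List.get_eq_getElem, List.get_eq_getElem, hgi] at h2
        rw [List.get_eq_getElem] at hxle
        omega
      omega
    · rintro ⟨i, hi, rfl⟩
      have hi' : i < L.length := lt_of_lt_of_le (lt_of_lt_of_le hi inf_le_left) (by omega)
      constructor
      · exact (Finset.mem_sort _).1 (List.getElem_mem _)
      · have : (⟨i, hi'⟩ : Fin L.length) ≤ ⟨k, hk'⟩ := by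
          simp only [Fin.mk_le_mk]; omega
        have := hmono.monotone this
        simpa using this
  rw [key]
  have hnd : (L.take (k+1)).Nodup := (Finset.sort_nodup _ _).sublist (List.take_sublist _ _)
  rw [List.toFinset_card_of_nodup hnd, List.length_take]
  omega

lemma sort_get_mem (S : Finset ℕ) (k : ℕ) (hk : k < S.card) :
    (S.sort (· ≤ ·)).get ⟨k, by rwa [Finset.length_sort]⟩ ∈ S := by
  rw [List.get_eq_getElem]
  exact (Finset.mem_sort _).1 (List.getElem_mem _)

lemma filter_lt_card_le_iff (S : Finset ℕ) (k : ℕ) (hk : k < S.card) (v : ℕ) :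
    (S.filter (fun x => x < v)).card ≤ k ↔
      v ≤ (S.sort (· ≤ ·)).get ⟨k, by rwa [Finset.length_sort]⟩ := by
  set g := (S.sort (· ≤ ·)).get ⟨k, by rwa [Finset.length_sort]⟩ with hg
  have hA : (S.filter (fun x => x ≤ g)).card = k + 1 := filter_le_sort_get S k hk
  have hgS : g ∈ S := sort_get_mem S k hk
  constructor
  · intro h
    by_contra hv
    push_neg at hv   -- g < v
    have hsub : S.filter (fun x => x ≤ g) ⊆ S.filter (fun x => x < v) := by
      intro x hx
      simp only [Finset.mem_filter] at hx ⊢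
      exact ⟨hx.1, by omega⟩
    have := Finset.card_le_card hsub
    omega
  · intro hv
    have hsub : S.filter (fun x => x < v) ⊆ (S.filter (fun x => x ≤ g)).erase g := by
      intro x hx
      simp only [Finset.mem_filter] at hx
      rw [Finset.mem_erase, Finset.mem_filter]
      refine ⟨by omega, hx.1, by omega⟩
    have hgmem : g ∈ S.filter (fun x => x ≤ g) := Finset.mem_filter.2 ⟨hgS, le_refl _⟩
    have := Finset.card_le_card hsub
    rw [Finset.card_erase_of_mem hgmem, hA] at this
    omega

lemma card_filter_le_add (S : Finset ℕ) (v : ℕ) :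
    (S.filter (fun x => x ≤ v)).card + (S.filter (fun x => v < x)).card = S.card := by
  classical
  have h := Finset.card_filter_add_card_filter_not (s := S) (p := fun x => x ≤ v)
  simpa using h

lemma compl_filter_card (m v : ℕ) (hv : v ≤ m) (I : Finset ℕ) (hIsub : I ⊆ Finset.Icc 1 m) :
    ((Finset.Icc 1 m \ I).filter (fun x => x ≤ v)).card
      = v - (I.filter (fun x => x ≤ v)).card := by
  have heq : (Finset.Icc 1 m \ I).filter (fun x => x ≤ v)
      = Finset.Icc 1 v \ (I.filter (fun x => x ≤ v)) := by
    ext x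
    simp only [Finset.mem_filter, Finset.mem_sdiff, Finset.mem_Icc]
    constructor
    · rintro ⟨⟨⟨h1, _⟩, hxI⟩, hxv⟩
      exact ⟨⟨h1, hxv⟩, fun hc => hxI hc.1⟩
    · rintro ⟨⟨h1, hxv⟩, hxI⟩
      exact ⟨⟨⟨h1, by omega⟩, fun hc => hxI ⟨hc, hxv⟩⟩, hxv⟩
  rw [heq, Finset.card_sdiff_of_subset]
  · rw [Nat.card_Icc]; omega
  · intro x hx
    simp only [Finset.mem_filter] at hx
    have := hIsub hx.1
    simp only [Finset.mem_Icc] at this ⊢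
    exact ⟨this.1, hx.2⟩

lemma card_triple (d e f : ℕ) (h1 : d < e) (h2 : e < f) :
    ({d, e, f} : Finset ℕ).card = 3 := by
  rw [Finset.card_insert_of_notMem (by simp; omega),
      Finset.card_insert_of_notMem (by simp; omega), Finset.card_singleton]

lemma good_iff (r m : ℕ) (hr : 3 ≤ r) (hm : r + 3 ≤ m) (I : Finset ℕ)
    (hIsub : I ⊆ Finset.Icc 1 m) (hIcard : I.card = r) :
    (∃ d e f : ℕ,
        d ∈ Finset.Icc 1 m \ I ∧ e ∈ Finset.Icc 1 m \ I ∧ f ∈ Finset.Icc 1 m \ I ∧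
        d < e ∧ e < f ∧
        (I.sort (· ≤ ·)).getD 0 0 < d ∧
        (I.sort (· ≤ ·)).getD 1 0 < e ∧
        (I.sort (· ≤ ·)).getD 2 0 < f) ↔
      ((I.sort (· ≤ ·)).getD 0 0 ≤ m - r - 2 ∧ (I.sort (· ≤ ·)).getD 1 0 ≤ m - r ∧
        (I.sort (· ≤ ·)).getD 2 0 ≤ m - r + 2) := by
  classical
  have hlen : (I.sort (· ≤ ·)).length = r := by rw [Finset.length_sort, hIcard]
  have h0 : (0:ℕ) < I.card := by omega
  have h1 : (1:ℕ) < I.card := by omega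
  have h2 : (2:ℕ) < I.card := by omega
  set a := (I.sort (· ≤ ·)).get ⟨0, by rwa [Finset.length_sort]⟩ with ha
  set b := (I.sort (· ≤ ·)).get ⟨1, by rwa [Finset.length_sort]⟩ with hb
  set c := (I.sort (· ≤ ·)).get ⟨2, by rwa [Finset.length_sort]⟩ with hc
  have hga : (I.sort (· ≤ ·)).getD 0 0 = a := by
    rw [ha, List.get_eq_getElem]; exact List.getD_eq_getElem _ _ (by omega)
  have hgb : (I.sort (· ≤ ·)).getD 1 0 = b := by
    rw [hb, List.get_eq_getElem]; exact List.getD_eq_getElem _ _ (by omega)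
  have hgc : (I.sort (· ≤ ·)).getD 2 0 = c := by
    rw [hc, List.get_eq_getElem]; exact List.getD_eq_getElem _ _ (by omega)
  rw [hga, hgb, hgc]
  have haI : a ∈ I := sort_get_mem I 0 h0
  have hbI : b ∈ I := sort_get_mem I 1 h1
  have hcI : c ∈ I := sort_get_mem I 2 h2
  have ham : a ∈ Finset.Icc 1 m := hIsub haI
  have hbm : b ∈ Finset.Icc 1 m := hIsub hbI
  have hcm : c ∈ Finset.Icc 1 m := hIsub hcI
  rw [Finset.mem_Icc] at ham hbm hcm
  have hca : (I.filter (fun x => x ≤ a)).card = 1 := filter_le_sort_get I 0 h0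
  have hcb : (I.filter (fun x => x ≤ b)).card = 2 := filter_le_sort_get I 1 h1
  have hcc : (I.filter (fun x => x ≤ c)).card = 3 := filter_le_sort_get I 2 h2
  constructor
  · rintro ⟨d, e, f, hd, he, hf, hde, hef, had, hbe, hcf⟩
    rw [Finset.mem_sdiff, Finset.mem_Icc] at hd he hf
    -- bound for a
    have key : ∀ v : ℕ, v ∈ I → ∀ T : Finset ℕ, (∀ x ∈ T, v < x ∧ x ≤ m ∧ x ∉ I) →
        (I.filter (fun x => x ≤ v)).card + (r - (I.filter (fun x => x ≤ v)).card) + T.card ≤ m - v + (I.filter (fun x => x ≤ v)).card := by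
      intro v hvI T hT
      have hunion : I.filter (fun x => v < x) ∪ T ⊆ Finset.Icc (v+1) m := by
        intro x hx
        rcases Finset.mem_union.1 hx with hx | hx
        · simp only [Finset.mem_filter] at hx
          have := hIsub hx.1
          rw [Finset.mem_Icc] at this ⊢
          exact ⟨by omega, this.2⟩
        · rcases hT x hx with ⟨hvx, hxm, _⟩
          rw [Finset.mem_Icc]; exact ⟨by omega, hxm⟩
      have hdisj : Disjoint (I.filter (fun x => v < x)) T := by
        rw [Finset.disjoint_left]
        intro x hx hxT
        exact (hT x hxT).2.2 (Finset.mem_filter.1 hx).1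
      have hcard := Finset.card_le_card hunion
      rw [Finset.card_union_of_disjoint hdisj, Nat.card_Icc] at hcard
      have hadd := card_filter_le_add I v
      omega
    have hka := key a haI {d, e, f} (by
      intro x hx
      simp only [Finset.mem_insert, Finset.mem_singleton] at hx
      rcases hx with rfl | rfl | rfl
      · exact ⟨had, hd.1.2, hd.2⟩
      · exact ⟨by omega, he.1.2, he.2⟩
      · exact ⟨by omega, hf.1.2, hf.2⟩)
    rw [card_triple d e f hde hef] at hka
    have hkb := key b hbI {e, f} (by
      intro x hx
      simp only [Finset.mem_insert, Finset.mem_singleton] at hx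
      rcases hx with rfl | rfl
      · exact ⟨hbe, he.1.2, he.2⟩
      · exact ⟨by omega, hf.1.2, hf.2⟩)
    have hc2 : ({e, f} : Finset ℕ).card = 2 := by
      rw [Finset.card_insert_of_notMem (by simp; omega), Finset.card_singleton]
    rw [hc2] at hkb
    have hkc := key c hcI {f} (by
      intro x hx
      simp only [Finset.mem_singleton] at hx
      subst hx
      exact ⟨hcf, hf.1.2, hf.2⟩)
    rw [Finset.card_singleton] at hkc
    rw [hca] at hka; rw [hcb] at hkb; rw [hcc] at hkc
    omega
  · rintro ⟨hA, hB, hC⟩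
    set J := Finset.Icc 1 m \ I with hJ
    have hJcard : J.card = m - r := by
      rw [hJ, Finset.card_sdiff_of_subset hIsub, Nat.card_Icc, hIcard]
      omega
    set t := m - r with ht
    have ht3 : 3 ≤ t := by omega
    have hd3 : t - 3 < J.card := by omega
    have hd2 : t - 2 < J.card := by omega
    have hd1 : t - 1 < J.card := by omega
    set d := (J.sort (· ≤ ·)).get ⟨t-3, by rwa [Finset.length_sort]⟩ with hdd
    set e := (J.sort (· ≤ ·)).get ⟨t-2, by rwa [Finset.length_sort]⟩ with hee
    set f := (J.sort (· ≤ ·)).get ⟨t-1, by rwa [Finset.length_sort]⟩ with hff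
    have hmono := (Finset.sortedLT_sort J).strictMono_get
    have hde : d < e := by
      apply hmono
      simp only [Fin.mk_lt_mk]
      omega
    have hef : e < f := by
      apply hmono
      simp only [Fin.mk_lt_mk]
      omega
    have hdJ : d ∈ J := sort_get_mem J (t-3) hd3
    have heJ : e ∈ J := sort_get_mem J (t-2) hd2
    have hfJ : f ∈ J := sort_get_mem J (t-1) hd1
    -- counting in J
    have hcnt : ∀ v : ℕ, v ≤ m → (J.filter (fun x => x < v + 1)).card
        = v - (I.filter (fun x => x ≤ v)).card := by
      intro v hv
      simp only [Nat.lt_succ_iff]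
      exact compl_filter_card m v hv I hIsub
    have had : a < d := by
      have hle : (J.filter (fun x => x < a + 1)).card ≤ t - 3 := by
        rw [hcnt a (by omega), hca]; omega
      have := (filter_lt_card_le_iff J (t-3) hd3 (a+1)).1 hle
      omega
    have hbe : b < e := by
      have hle : (J.filter (fun x => x < b + 1)).card ≤ t - 2 := by
        rw [hcnt b (by omega), hcb]; omega
      have := (filter_lt_card_le_iff J (t-2) hd2 (b+1)).1 hle
      omega
    have hcf : c < f := by
      have hle : (J.filter (fun x => x < c + 1)).card ≤ t - 1 := by
        rw [hcnt c (by omega), hcc]; omega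
      have := (filter_lt_card_le_iff J (t-1) hd1 (c+1)).1 hle
      omega
    exact ⟨d, e, f, hdJ, heJ, hfJ, hde, hef, had, hbe, hcf⟩

lemma getD_eq (I : Finset ℕ) (j : ℕ) (h : j < I.card) :
    (I.sort (· ≤ ·)).getD j 0 = (I.sort (· ≤ ·)).get ⟨j, by rwa [Finset.length_sort]⟩ := by
  rw [List.get_eq_getElem]
  exact List.getD_eq_getElem _ _ (by rwa [Finset.length_sort])

section S1
lemma structC (r m : ℕ) (hr : 3 ≤ r) (hm : r + 3 ≤ m) (I : Finset ℕ) :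
    (I ⊆ Finset.Icc 1 m ∧ I.card = r ∧ m - r + 3 ≤ (I.sort (· ≤ ·)).getD 2 0) ↔
      (∃ K ∈ Finset.powersetCard 2 (Finset.Icc 1 (m - r + 2)),
        I = K ∪ Finset.Icc (m - r + 3) m) := by
  classical
  set t := m - r with ht
  constructor
  · rintro ⟨hIsub, hIcard, hc⟩
    have h2 : (2:ℕ) < I.card := by omega
    rw [getD_eq I 2 h2] at hc
    have hKcard : (I.filter (fun x => x < t + 3)).card ≤ 2 :=
      (filter_lt_card_le_iff I 2 h2 (t+3)).2 hc
    have hsplit := Finset.card_filter_add_card_filter_not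
      (s := I) (p := fun x => x < t + 3)
    have hhi : I.filter (fun x => ¬ x < t + 3) ⊆ Finset.Icc (t+3) m := by
      intro x hx
      simp only [Finset.mem_filter, not_lt] at hx
      have := hIsub hx.1
      rw [Finset.mem_Icc] at this ⊢
      exact ⟨hx.2, this.2⟩
    have hIccCard : (Finset.Icc (t+3) m).card = r - 2 := by
      rw [Nat.card_Icc]; omega
    have hhicard : (Finset.Icc (t+3) m).card ≤ (I.filter (fun x => ¬ x < t + 3)).card := by
      omega
    have hhieq : I.filter (fun x => ¬ x < t + 3) = Finset.Icc (t+3) m :=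
      Finset.eq_of_subset_of_card_le hhi hhicard
    refine ⟨I.filter (fun x => x < t + 3), ?_, ?_⟩
    · rw [Finset.mem_powersetCard]
      constructor
      · intro x hx
        simp only [Finset.mem_filter] at hx
        have := hIsub hx.1
        rw [Finset.mem_Icc] at this ⊢
        exact ⟨this.1, by omega⟩
      · rw [hhieq, hIccCard] at hsplit; omega
    · rw [← hhieq, Finset.filter_union_filter_not_eq]
  · rintro ⟨K, hK, rfl⟩
    rw [Finset.mem_powersetCard] at hK
    obtain ⟨hKsub, hKcard⟩ := hK
    have hKbd : ∀ x ∈ K, 1 ≤ x ∧ x ≤ t + 2 := by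
      intro x hx
      have := hKsub hx
      rw [Finset.mem_Icc] at this
      exact this
    have hdisj : Disjoint K (Finset.Icc (t+3) m) := by
      rw [Finset.disjoint_left]
      intro x hx hx'
      have := hKbd x hx
      rw [Finset.mem_Icc] at hx'
      omega
    have hcard : (K ∪ Finset.Icc (t+3) m).card = r := by
      rw [Finset.card_union_of_disjoint hdisj, hKcard, Nat.card_Icc]
      omega
    have hsub : K ∪ Finset.Icc (t+3) m ⊆ Finset.Icc 1 m := by
      intro x hx
      rcases Finset.mem_union.1 hx with hx | hx
      · have := hKbd x hx
        rw [Finset.mem_Icc]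
        omega
      · rw [Finset.mem_Icc] at hx ⊢
        omega
    refine ⟨hsub, hcard, ?_⟩
    have h2 : (2:ℕ) < (K ∪ Finset.Icc (t+3) m).card := by omega
    rw [getD_eq _ 2 h2]
    rw [← filter_lt_card_le_iff _ 2 h2 (t+3)]
    have : (K ∪ Finset.Icc (t+3) m).filter (fun x => x < t + 3) = K := by
      rw [Finset.filter_union]
      have e1 : K.filter (fun x => x < t + 3) = K :=
        Finset.filter_true_of_mem (fun x hx => by have := hKbd x hx; omega)
      have e2 : (Finset.Icc (t+3) m).filter (fun x => x < t + 3) = ∅ :=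
        Finset.filter_false_of_mem (fun x hx => by rw [Finset.mem_Icc] at hx; omega)
      rw [e1, e2, Finset.union_empty]
    rw [this, hKcard]

lemma structB (r m : ℕ) (hr : 3 ≤ r) (hm : r + 3 ≤ m) (I : Finset ℕ) :
    (I ⊆ Finset.Icc 1 m ∧ I.card = r ∧ m - r + 1 ≤ (I.sort (· ≤ ·)).getD 1 0 ∧
        (I.sort (· ≤ ·)).getD 2 0 ≤ m - r + 2) ↔
      (∃ q ∈ Finset.Icc 1 (m - r), ∃ x ∈ Finset.Icc (m - r + 3) m,
        I = insert q (Finset.Icc (m - r + 1) m \ {x})) := by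
  classical
  set t := m - r with ht
  constructor
  · rintro ⟨hIsub, hIcard, hb, hc⟩
    have h1 : (1:ℕ) < I.card := by omega
    have h2 : (2:ℕ) < I.card := by omega
    rw [getD_eq I 1 h1] at hb
    rw [getD_eq I 2 h2] at hc
    have hlo : (I.filter (fun x => x < t + 1)).card ≤ 1 :=
      (filter_lt_card_le_iff I 1 h1 (t+1)).2 hb
    have hcc : ¬ (I.filter (fun x => x < t + 3)).card ≤ 2 := by
      intro h
      have := (filter_lt_card_le_iff I 2 h2 (t+3)).1 h
      omega
    have hsplit := Finset.card_filter_add_card_filter_not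
      (s := I) (p := fun x => x < t + 1)
    have hhi : I.filter (fun x => ¬ x < t + 1) ⊆ Finset.Icc (t+1) m := by
      intro x hx
      simp only [Finset.mem_filter, not_lt] at hx
      have := hIsub hx.1
      rw [Finset.mem_Icc] at this ⊢
      exact ⟨hx.2, this.2⟩
    have hIccCard : (Finset.Icc (t+1) m).card = r := by
      rw [Nat.card_Icc]; omega
    -- t+1 and t+2 are in I
    have ht1 : t + 1 ∈ I := by
      by_contra hn
      apply hcc
      have : I.filter (fun x => x < t + 3) ⊆ insert (t+2) (I.filter (fun x => x < t + 1)) := by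
        intro x hx
        simp only [Finset.mem_filter] at hx
        simp only [Finset.mem_insert, Finset.mem_filter]
        rcases Nat.lt_or_ge x (t+1) with h | h
        · exact Or.inr ⟨hx.1, h⟩
        · left
          have : x ≠ t + 1 := fun hx1 => hn (hx1 ▸ hx.1)
          omega
      calc (I.filter (fun x => x < t + 3)).card ≤ _ := Finset.card_le_card this
        _ ≤ (I.filter (fun x => x < t + 1)).card + 1 := Finset.card_insert_le _ _
        _ ≤ 2 := by omega
    have ht2 : t + 2 ∈ I := by
      by_contra hn
      apply hcc
      have : I.filter (fun x => x < t + 3) ⊆ insert (t+1) (I.filter (fun x => x < t + 1)) := by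
        intro x hx
        simp only [Finset.mem_filter] at hx
        simp only [Finset.mem_insert, Finset.mem_filter]
        rcases Nat.lt_or_ge x (t+1) with h | h
        · exact Or.inr ⟨hx.1, h⟩
        · left
          have : x ≠ t + 2 := fun hx1 => hn (hx1 ▸ hx.1)
          omega
      calc (I.filter (fun x => x < t + 3)).card ≤ _ := Finset.card_le_card this
        _ ≤ (I.filter (fun x => x < t + 1)).card + 1 := Finset.card_insert_le _ _
        _ ≤ 2 := by omega
    -- the low part is exactly one element q
    have hlocard : (I.filter (fun x => x < t + 1)).card = 1 := by
      by_contra hn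
      have h0 : (I.filter (fun x => x < t + 1)).card = 0 := by omega
      -- then I ⊆ Icc (t+1) m with equal card, so I = Icc (t+1) m
      have hIsubhi : I ⊆ Finset.Icc (t+1) m := by
        intro x hx
        by_cases hxlt : x < t + 1
        · exfalso
          have : x ∈ I.filter (fun x => x < t + 1) := Finset.mem_filter.2 ⟨hx, hxlt⟩
          rw [Finset.card_eq_zero.1 h0] at this
          exact absurd this (Finset.notMem_empty x)
        · have := hIsub hx
          rw [Finset.mem_Icc] at this ⊢
          omega
      have hIeq : I = Finset.Icc (t+1) m :=
        Finset.eq_of_subset_of_card_le hIsubhi (by omega)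
      apply hcc
      have : I.filter (fun x => x < t + 3) = {t+1, t+2} := by
        rw [hIeq]
        ext x
        simp only [Finset.mem_filter, Finset.mem_Icc, Finset.mem_insert, Finset.mem_singleton]
        omega
      rw [this]
      apply le_trans (Finset.card_insert_le _ _)
      simp
    obtain ⟨q, hq⟩ := Finset.card_eq_one.1 hlocard
    have hqI : q ∈ I ∧ q < t + 1 := by
      have : q ∈ I.filter (fun x => x < t + 1) := hq ▸ Finset.mem_singleton_self q
      exact Finset.mem_filter.1 this
    have hq1 : 1 ≤ q := by
      have := hIsub hqI.1
      rw [Finset.mem_Icc] at this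
      exact this.1
    -- the missing element x
    have hhicard : (I.filter (fun x => ¬ x < t + 1)).card = r - 1 := by omega
    have hXcard : (Finset.Icc (t+1) m \ I.filter (fun x => ¬ x < t + 1)).card = 1 := by
      rw [Finset.card_sdiff_of_subset hhi, hIccCard, hhicard]; omega
    obtain ⟨x, hx⟩ := Finset.card_eq_one.1 hXcard
    have hxmem : x ∈ Finset.Icc (t+1) m ∧ x ∉ I.filter (fun y => ¬ y < t + 1) := by
      have : x ∈ Finset.Icc (t+1) m \ I.filter (fun y => ¬ y < t + 1) :=
        hx ▸ Finset.mem_singleton_self x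
      exact Finset.mem_sdiff.1 this
    have hxIcc := hxmem.1
    rw [Finset.mem_Icc] at hxIcc
    have hxnI : x ∉ I := by
      intro hxI
      exact hxmem.2 (Finset.mem_filter.2 ⟨hxI, by omega⟩)
    have hxne1 : x ≠ t + 1 := fun h => hxnI (h ▸ ht1)
    have hxne2 : x ≠ t + 2 := fun h => hxnI (h ▸ ht2)
    refine ⟨q, by rw [Finset.mem_Icc]; omega, x, by rw [Finset.mem_Icc]; omega, ?_⟩
    -- I = insert q (Icc (t+1) m \ {x})
    ext z
    simp only [Finset.mem_insert, Finset.mem_sdiff, Finset.mem_Icc, Finset.mem_singleton]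
    constructor
    · intro hz
      by_cases hzlt : z < t + 1
      · left
        have : z ∈ I.filter (fun y => y < t + 1) := Finset.mem_filter.2 ⟨hz, hzlt⟩
        rw [hq] at this
        exact Finset.mem_singleton.1 this
      · right
        have hzI : z ∈ I.filter (fun y => ¬ y < t + 1) := Finset.mem_filter.2 ⟨hz, hzlt⟩
        have := hhi hzI
        rw [Finset.mem_Icc] at this
        exact ⟨this, fun h => hxnI (h ▸ hz)⟩
    · rintro (rfl | ⟨⟨hz1, hz2⟩, hzx⟩)
      · exact hqI.1
      · by_contra hzI
        have : z ∈ Finset.Icc (t+1) m \ I.filter (fun y => ¬ y < t + 1) := by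
          rw [Finset.mem_sdiff, Finset.mem_Icc]
          exact ⟨⟨hz1, hz2⟩, fun h => hzI (Finset.mem_filter.1 h).1⟩
        rw [hx, Finset.mem_singleton] at this
        exact hzx this
  · rintro ⟨q, hq, x, hx, rfl⟩
    rw [Finset.mem_Icc] at hq hx
    have hxIcc : x ∈ Finset.Icc (t+1) m := by rw [Finset.mem_Icc]; omega
    have hqn : q ∉ Finset.Icc (t+1) m \ {x} := by
      rw [Finset.mem_sdiff, Finset.mem_Icc]
      push_neg
      intro h
      omega
    have hcard : (insert q (Finset.Icc (t+1) m \ {x})).card = r := by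
      rw [Finset.card_insert_of_notMem hqn, Finset.card_sdiff_of_subset (by
        intro y hy
        rw [Finset.mem_singleton] at hy
        subst hy
        exact hxIcc), Nat.card_Icc, Finset.card_singleton]
      omega
    have hsub : insert q (Finset.Icc (t+1) m \ {x}) ⊆ Finset.Icc 1 m := by
      intro y hy
      rcases Finset.mem_insert.1 hy with rfl | hy
      · rw [Finset.mem_Icc]; omega
      · rw [Finset.mem_sdiff, Finset.mem_Icc] at hy
        rw [Finset.mem_Icc]
        omega
    refine ⟨hsub, hcard, ?_, ?_⟩
    · have h1 : (1:ℕ) < (insert q (Finset.Icc (t+1) m \ {x})).card := by omega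
      rw [getD_eq _ 1 h1, ← filter_lt_card_le_iff _ 1 h1 (t+1)]
      have : (insert q (Finset.Icc (t+1) m \ {x})).filter (fun y => y < t + 1) = {q} := by
        ext z
        simp only [Finset.mem_filter, Finset.mem_insert, Finset.mem_sdiff, Finset.mem_Icc,
          Finset.mem_singleton]
        constructor
        · rintro ⟨rfl | ⟨⟨h1', _⟩, _⟩, hz⟩
          · rfl
          · omega
        · rintro rfl
          exact ⟨Or.inl rfl, by omega⟩
      rw [this, Finset.card_singleton]
    · have h2 : (2:ℕ) < (insert q (Finset.Icc (t+1) m \ {x})).card := by omega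
      rw [getD_eq _ 2 h2]
      by_contra hcon
      push_neg at hcon
      have hle : t + 3 ≤ (((insert q (Finset.Icc (t+1) m \ {x}))).sort (· ≤ ·)).get
          ⟨2, by rwa [Finset.length_sort]⟩ := hcon
      have := (filter_lt_card_le_iff _ 2 h2 (t+3)).2 hle
      have hsup : ({q, t+1, t+2} : Finset ℕ) ⊆
          (insert q (Finset.Icc (t+1) m \ {x})).filter (fun y => y < t + 3) := by
        intro z hz
        simp only [Finset.mem_insert, Finset.mem_singleton] at hz
        rw [Finset.mem_filter, Finset.mem_insert, Finset.mem_sdiff, Finset.mem_Icc,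
          Finset.mem_singleton]
        rcases hz with rfl | rfl | rfl
        · exact ⟨Or.inl rfl, by omega⟩
        · exact ⟨Or.inr ⟨⟨le_refl _, by omega⟩, by omega⟩, by omega⟩
        · exact ⟨Or.inr ⟨⟨by omega, by omega⟩, by omega⟩, by omega⟩
      have hc3 : ({q, t+1, t+2} : Finset ℕ).card = 3 := by
        rw [Finset.card_insert_of_notMem (by simp; omega),
          Finset.card_insert_of_notMem (by simp), Finset.card_singleton]
      have := Finset.card_le_card hsup
      omega

lemma structA (r m : ℕ) (hr : 3 ≤ r) (hm : r + 3 ≤ m) (I : Finset ℕ) :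
    (I ⊆ Finset.Icc 1 m ∧ I.card = r ∧ m - r - 1 ≤ (I.sort (· ≤ ·)).getD 0 0 ∧
        (I.sort (· ≤ ·)).getD 1 0 ≤ m - r ∧ (I.sort (· ≤ ·)).getD 2 0 ≤ m - r + 2) ↔
      (∃ K, K ⊆ Finset.Icc (m - r + 1) m ∧ K.card = 2 ∧ K ≠ {m - r + 1, m - r + 2} ∧
        I = Finset.Icc (m - r - 1) m \ K) := by
  classical
  set t := m - r with ht
  have ht3 : 3 ≤ t := by omega
  constructor
  · rintro ⟨hIsub, hIcard, haa, hbb, hcc⟩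
    have h0 : (0:ℕ) < I.card := by omega
    have h1 : (1:ℕ) < I.card := by omega
    have h2 : (2:ℕ) < I.card := by omega
    rw [getD_eq I 0 h0] at haa
    rw [getD_eq I 1 h1] at hbb
    rw [getD_eq I 2 h2] at hcc
    -- all elements of I are ≥ t - 1
    have hlow : (I.filter (fun x => x < t - 1)).card ≤ 0 :=
      (filter_lt_card_le_iff I 0 h0 (t-1)).2 haa
    have hIsub' : I ⊆ Finset.Icc (t-1) m := by
      intro x hx
      have hxm := hIsub hx
      rw [Finset.mem_Icc] at hxm ⊢
      refine ⟨?_, hxm.2⟩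
      by_contra hc
      have : x ∈ I.filter (fun y => y < t - 1) := Finset.mem_filter.2 ⟨hx, by omega⟩
      have := Finset.card_pos.2 ⟨x, this⟩
      omega
    -- b ≤ t implies t-1 and t in I
    have hb2 : ¬ (I.filter (fun x => x < t + 1)).card ≤ 1 := by
      intro h
      have := (filter_lt_card_le_iff I 1 h1 (t+1)).1 h
      omega
    have hfb : I.filter (fun x => x < t + 1) ⊆ {t-1, t} := by
      intro x hx
      simp only [Finset.mem_filter] at hx
      have := hIsub' hx.1
      rw [Finset.mem_Icc] at this
      simp only [Finset.mem_insert, Finset.mem_singleton]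
      omega
    have hfbeq : I.filter (fun x => x < t + 1) = {t-1, t} := by
      apply Finset.eq_of_subset_of_card_le hfb
      have : ({t-1, t} : Finset ℕ).card ≤ 2 := by
        apply le_trans (Finset.card_insert_le _ _); simp
      omega
    have htm1 : t - 1 ∈ I := by
      have : t - 1 ∈ I.filter (fun x => x < t + 1) := by
        rw [hfbeq]; simp
      exact (Finset.mem_filter.1 this).1
    have htI : t ∈ I := by
      have : t ∈ I.filter (fun x => x < t + 1) := by
        rw [hfbeq]; simp
      exact (Finset.mem_filter.1 this).1
    -- c ≤ t+2 implies t+1 or t+2 in I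
    have hc2 : ¬ (I.filter (fun x => x < t + 3)).card ≤ 2 := by
      intro h
      have := (filter_lt_card_le_iff I 2 h2 (t+3)).1 h
      omega
    have hone : t + 1 ∈ I ∨ t + 2 ∈ I := by
      by_contra hn
      push_neg at hn
      apply hc2
      have : I.filter (fun x => x < t + 3) ⊆ {t-1, t} := by
        intro x hx
        simp only [Finset.mem_filter] at hx
        have := hIsub' hx.1
        rw [Finset.mem_Icc] at this
        simp only [Finset.mem_insert, Finset.mem_singleton]
        have hx1 : x ≠ t + 1 := fun h => hn.1 (h ▸ hx.1)
        have hx2 : x ≠ t + 2 := fun h => hn.2 (h ▸ hx.1)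
        omega
      calc (I.filter (fun x => x < t + 3)).card ≤ ({t-1, t} : Finset ℕ).card :=
            Finset.card_le_card this
        _ ≤ 2 := by apply le_trans (Finset.card_insert_le _ _); simp
    set K := Finset.Icc (t-1) m \ I with hK
    have hKcard : K.card = 2 := by
      rw [hK, Finset.card_sdiff_of_subset hIsub', Nat.card_Icc]
      omega
    have hIeq : I = Finset.Icc (t-1) m \ K := by
      rw [hK, Finset.sdiff_sdiff_self_left, Finset.inter_eq_right.2 hIsub']
    have hKsub : K ⊆ Finset.Icc (t+1) m := by
      intro x hx
      rw [hK, Finset.mem_sdiff, Finset.mem_Icc] at hx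
      rw [Finset.mem_Icc]
      have hx1 : x ≠ t - 1 := fun h => hx.2 (h ▸ htm1)
      have hx2 : x ≠ t := fun h => hx.2 (h ▸ htI)
      omega
    have hKne : K ≠ {t+1, t+2} := by
      intro hKeq
      rcases hone with h | h
      · have : t + 1 ∈ K := by rw [hKeq]; simp
        rw [hK, Finset.mem_sdiff] at this
        exact this.2 h
      · have : t + 2 ∈ K := by rw [hKeq]; simp
        rw [hK, Finset.mem_sdiff] at this
        exact this.2 h
    exact ⟨K, hKsub, hKcard, hKne, hIeq⟩
  · rintro ⟨K, hKsub, hKcard, hKne, rfl⟩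
    have hKbd : ∀ x ∈ K, t + 1 ≤ x ∧ x ≤ m := by
      intro x hx
      have := hKsub hx
      rwa [Finset.mem_Icc] at this
    have hKsub' : K ⊆ Finset.Icc (t-1) m := by
      intro x hx
      have := hKbd x hx
      rw [Finset.mem_Icc]
      omega
    have hcard : (Finset.Icc (t-1) m \ K).card = r := by
      rw [Finset.card_sdiff_of_subset hKsub', Nat.card_Icc, hKcard]
      omega
    have hsub : Finset.Icc (t-1) m \ K ⊆ Finset.Icc 1 m := by
      intro x hx
      rw [Finset.mem_sdiff, Finset.mem_Icc] at hx
      rw [Finset.mem_Icc]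
      omega
    have h0 : (0:ℕ) < (Finset.Icc (t-1) m \ K).card := by omega
    have h1 : (1:ℕ) < (Finset.Icc (t-1) m \ K).card := by omega
    have h2 : (2:ℕ) < (Finset.Icc (t-1) m \ K).card := by omega
    have htm1 : t - 1 ∈ Finset.Icc (t-1) m \ K := by
      rw [Finset.mem_sdiff, Finset.mem_Icc]
      refine ⟨⟨le_refl _, by omega⟩, fun h => by have := hKbd _ h; omega⟩
    have htI : t ∈ Finset.Icc (t-1) m \ K := by
      rw [Finset.mem_sdiff, Finset.mem_Icc]
      refine ⟨⟨by omega, by omega⟩, fun h => by have := hKbd _ h; omega⟩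
    have hone : t + 1 ∈ Finset.Icc (t-1) m \ K ∨ t + 2 ∈ Finset.Icc (t-1) m \ K := by
      by_contra hn
      push_neg at hn
      apply hKne
      have h1' : t + 1 ∈ K := by
        by_contra hc
        exact absurd (by rw [Finset.mem_sdiff, Finset.mem_Icc]
                         exact ⟨⟨by omega, by omega⟩, hc⟩) hn.1
      have h2' : t + 2 ∈ K := by
        by_contra hc
        exact absurd (by rw [Finset.mem_sdiff, Finset.mem_Icc]
                         exact ⟨⟨by omega, by omega⟩, hc⟩) hn.2
      have hsub2 : ({t+1, t+2} : Finset ℕ) ⊆ K := by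
        intro z hz
        simp only [Finset.mem_insert, Finset.mem_singleton] at hz
        rcases hz with rfl | rfl
        · exact h1'
        · exact h2'
      have hc2 : ({t+1, t+2} : Finset ℕ).card = 2 := by
        rw [Finset.card_insert_of_notMem (by simp), Finset.card_singleton]
      exact (Finset.eq_of_subset_of_card_le hsub2 (by omega)).symm
    refine ⟨hsub, hcard, ?_, ?_, ?_⟩
    · rw [getD_eq _ 0 h0, ← filter_lt_card_le_iff _ 0 h0 (t-1)]
      have : (Finset.Icc (t-1) m \ K).filter (fun x => x < t - 1) = ∅ := by
        apply Finset.filter_false_of_mem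
        intro x hx
        rw [Finset.mem_sdiff, Finset.mem_Icc] at hx
        omega
      rw [this, Finset.card_empty]
    · rw [getD_eq _ 1 h1]
      by_contra hcon
      push_neg at hcon
      have := (filter_lt_card_le_iff _ 1 h1 (t+1)).2 hcon
      have hsup : ({t-1, t} : Finset ℕ) ⊆
          (Finset.Icc (t-1) m \ K).filter (fun x => x < t + 1) := by
        intro z hz
        simp only [Finset.mem_insert, Finset.mem_singleton] at hz
        rw [Finset.mem_filter]
        rcases hz with rfl | rfl
        · exact ⟨htm1, by omega⟩
        · exact ⟨htI, by omega⟩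
      have hc2 : ({t-1, t} : Finset ℕ).card = 2 := by
        rw [Finset.card_insert_of_notMem (by simp; omega), Finset.card_singleton]
      have := Finset.card_le_card hsup
      omega
    · rw [getD_eq _ 2 h2]
      by_contra hcon
      push_neg at hcon
      have := (filter_lt_card_le_iff _ 2 h2 (t+3)).2 (by omega)
      obtain ⟨u, huI, hu1, hu2⟩ : ∃ u, u ∈ Finset.Icc (t-1) m \ K ∧ t + 1 ≤ u ∧ u ≤ t + 2 := by
        rcases hone with h | h
        · exact ⟨t+1, h, le_refl _, by omega⟩
        · exact ⟨t+2, h, by omega, le_refl _⟩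
      have hsup : ({t-1, t, u} : Finset ℕ) ⊆
          (Finset.Icc (t-1) m \ K).filter (fun x => x < t + 3) := by
        intro z hz
        simp only [Finset.mem_insert, Finset.mem_singleton] at hz
        rw [Finset.mem_filter]
        rcases hz with rfl | rfl | rfl
        · exact ⟨htm1, by omega⟩
        · exact ⟨htI, by omega⟩
        · exact ⟨huI, by omega⟩
      have hc3 : ({t-1, t, u} : Finset ℕ).card = 3 := by
        rw [Finset.card_insert_of_notMem (by simp; omega),
          Finset.card_insert_of_notMem (by simp; omega), Finset.card_singleton]
      have := Finset.card_le_card hsup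
      omega


lemma two_mul_choose_two (n : ℕ) : 2 * n.choose 2 = n * (n - 1) := by
  rw [Nat.choose_two_right, Nat.mul_div_cancel']
  rcases n with _ | k
  · simp
  · rw [Nat.succ_sub_one, Nat.mul_comm]
    exact (Nat.even_mul_succ_self k).two_dvd

lemma sum_id (r : ℕ) (hr : 3 ≤ r) : ∀ k : ℕ, 1 ≤ k →
    (∑ i ∈ Finset.Icc 1 k, (i : ℤ) * ((r + k - 2 - i).choose (r - 3) : ℤ))
      = ((r + k - 1).choose (r - 1) : ℤ) - (k + 1) := by
  intro k hk
  induction k, hk using Nat.le_induction with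
  | base =>
    rw [Finset.Icc_self, Finset.sum_singleton]
    have h1 : r + 1 - 2 - 1 = r - 2 := by omega
    have h2 : (r - 2).choose (r - 3) = r - 2 := by
      have e : r - 3 = (r - 2) - 1 := by omega
      rw [e, Nat.choose_symm (by omega), Nat.choose_one_right]
    have h3 : (r + 1 - 1).choose (r - 1) = r := by
      have e : r + 1 - 1 = r := by omega
      have e2 : r - 1 = r - 1 := rfl
      rw [e]
      have e3 : r - 1 = r - 1 := rfl
      have : r.choose (r - 1) = r.choose 1 := by
        have : r - (r-1) = 1 := by omega
        conv_lhs => rw [show r - 1 = r - 1 from rfl]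
        rw [← this, Nat.choose_symm (by omega)]
      rw [this, Nat.choose_one_right]
    rw [h1, h2, h3]
    push_cast [Nat.cast_sub (show 2 ≤ r by omega)]
    ring
  | succ k hk ih =>
    -- rewrite the summand for k+1
    have hstep : ∀ i ∈ Finset.Icc 1 (k+1), (i : ℤ) * ((r + (k+1) - 2 - i).choose (r - 3) : ℤ)
        = ((i : ℤ) - 1) * ((r + k - 1 - i).choose (r - 3) : ℤ)
          + ((r + k - 1 - i).choose (r - 3) : ℤ) := by
      intro i hi
      have : r + (k+1) - 2 - i = r + k - 1 - i := by omega
      rw [this]; ring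
    rw [Finset.sum_congr rfl hstep, Finset.sum_add_distrib]
    -- first sum equals the k-sum
    have hsum1 : (∑ i ∈ Finset.Icc 1 (k+1), ((i : ℤ) - 1) * ((r + k - 1 - i).choose (r - 3) : ℤ))
        = ∑ j ∈ Finset.Icc 0 k, (j : ℤ) * ((r + k - 2 - j).choose (r - 3) : ℤ) := by
      apply Finset.sum_nbij' (fun i => i - 1) (fun j => j + 1)
      · intro a ha
        rw [Finset.mem_Icc] at ha ⊢
        omega
      · intro a ha
        rw [Finset.mem_Icc] at ha ⊢
        omega
      · intro a ha
        rw [Finset.mem_Icc] at ha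
        omega
      · intro a ha
        omega
      · intro a ha
        rw [Finset.mem_Icc] at ha
        have e1 : ((a - 1 : ℕ) : ℤ) = (a : ℤ) - 1 := by
          push_cast [Nat.cast_sub (show 1 ≤ a by omega)]; ring
        have e2 : r + k - 2 - (a - 1) = r + k - 1 - a := by omega
        rw [e1, e2]
    have hzero : (∑ j ∈ Finset.Icc 0 k, (j : ℤ) * ((r + k - 2 - j).choose (r - 3) : ℤ))
        = ∑ j ∈ Finset.Icc 1 k, (j : ℤ) * ((r + k - 2 - j).choose (r - 3) : ℤ) := by
      have : Finset.Icc 0 k = insert 0 (Finset.Icc 1 k) := by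
        ext x
        simp only [Finset.mem_Icc, Finset.mem_insert]
        omega
      rw [this, Finset.sum_insert (by simp)]
      simp
    -- second sum: hockey stick
    have hsum2 : (∑ i ∈ Finset.Icc 1 (k+1), ((r + k - 1 - i).choose (r - 3) : ℤ))
        = ((r + k - 1).choose (r - 2) : ℤ) - 1 := by
      have hre : (∑ i ∈ Finset.Icc 1 (k+1), ((r + k - 1 - i).choose (r - 3) : ℤ))
          = ∑ j ∈ Finset.Icc (r-2) (r+k-2), ((j).choose (r - 3) : ℤ) := by
        apply Finset.sum_nbij' (fun i => r + k - 1 - i) (fun j => r + k - 1 - j)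
        · intro a ha
          rw [Finset.mem_Icc] at ha ⊢
          omega
        · intro a ha
          rw [Finset.mem_Icc] at ha ⊢
          omega
        · intro a ha
          rw [Finset.mem_Icc] at ha
          omega
        · intro a ha
          rw [Finset.mem_Icc] at ha
          omega
        · intro a ha
          rfl
      rw [hre]
      have hnat : (∑ j ∈ Finset.Icc (r-2) (r+k-2), (j).choose (r - 3)) + 1
          = (r + k - 1).choose (r - 2) := by
        have hins : Finset.Icc (r-3) (r+k-2) = insert (r-3) (Finset.Icc (r-2) (r+k-2)) := by
          ext x
          simp only [Finset.mem_Icc, Finset.mem_insert]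
          omega
        have hhs := Nat.sum_Icc_choose (r+k-2) (r-3)
        rw [hins, Finset.sum_insert (by rw [Finset.mem_Icc]; omega), Nat.choose_self] at hhs
        have e1 : r + k - 2 + 1 = r + k - 1 := by omega
        have e2 : r - 3 + 1 = r - 2 := by omega
        rw [e1, e2] at hhs
        omega
      have := congrArg (fun x : ℕ => (x : ℤ)) hnat
      push_cast at this ⊢
      linarith
    rw [hsum1, hzero, hsum2, ih]
    have hpascal : (r + k).choose (r - 1) = (r+k-1).choose (r-2) + (r+k-1).choose (r-1) := by
      have e1 : r + k = (r + k - 1) + 1 := by omega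
      have e2 : r - 1 = (r - 2) + 1 := by omega
      rw [e1, e2, Nat.choose_succ_succ]
      simp [Nat.succ_eq_add_one]
    have e3 : r + (k+1) - 1 = r + k := by omega
    rw [e3, hpascal]
    push_cast
    ring

def GoodP (m : ℕ) (I : Finset ℕ) : Prop :=
  ∃ d e f : ℕ,
    d ∈ Finset.Icc 1 m \ I ∧ e ∈ Finset.Icc 1 m \ I ∧ f ∈ Finset.Icc 1 m \ I ∧
    d < e ∧ e < f ∧
    (I.sort (· ≤ ·)).getD 0 0 < d ∧
    (I.sort (· ≤ ·)).getD 1 0 < e ∧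
    (I.sort (· ≤ ·)).getD 2 0 < f


lemma good_iff_G (r m : ℕ) (hr : 3 ≤ r) (hm : r + 3 ≤ m) (I : Finset ℕ)
    (hIsub : I ⊆ Finset.Icc 1 m) (hIcard : I.card = r) :
    GoodP m I ↔
      ((I.sort (· ≤ ·)).getD 0 0 ≤ m - r - 2 ∧ (I.sort (· ≤ ·)).getD 1 0 ≤ m - r ∧
        (I.sort (· ≤ ·)).getD 2 0 ≤ m - r + 2) :=
  good_iff r m hr hm I hIsub hIcard

open scoped Classical in
lemma bad_card (r m : ℕ) (hr : 3 ≤ r) (hm : r + 3 ≤ m) :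
    ((Finset.powersetCard r (Finset.Icc 1 m)).filter (fun I => ¬ GoodP m I)).card
      = m.choose 2 := by
  set FC := (Finset.powersetCard 2 (Finset.Icc 1 (m - r + 2))).image
      (fun K => K ∪ Finset.Icc (m - r + 3) m) with hFCdef
  set FB := ((Finset.Icc 1 (m - r)) ×ˢ (Finset.Icc (m - r + 3) m)).image
      (fun q => insert q.1 (Finset.Icc (m - r + 1) m \ {q.2})) with hFBdef
  set FA := ((Finset.powersetCard 2 (Finset.Icc (m - r + 1) m)).erase
      {m - r + 1, m - r + 2}).image (fun K => Finset.Icc (m - r - 1) m \ K) with hFAdef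
  have hFC : ∀ I : Finset ℕ, I ∈ FC ↔
      (I ⊆ Finset.Icc 1 m ∧ I.card = r ∧ m - r + 3 ≤ (I.sort (· ≤ ·)).getD 2 0) := by
    intro I
    rw [structC r m hr hm I, hFCdef, Finset.mem_image]
    constructor
    · rintro ⟨K, hK, he⟩; exact ⟨K, hK, he.symm⟩
    · rintro ⟨K, hK, he⟩; exact ⟨K, hK, he.symm⟩
  have hFB : ∀ I : Finset ℕ, I ∈ FB ↔
      (I ⊆ Finset.Icc 1 m ∧ I.card = r ∧ m - r + 1 ≤ (I.sort (· ≤ ·)).getD 1 0 ∧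
        (I.sort (· ≤ ·)).getD 2 0 ≤ m - r + 2) := by
    intro I
    rw [structB r m hr hm I, hFBdef, Finset.mem_image]
    constructor
    · rintro ⟨q, hq, he⟩
      rw [Finset.mem_product] at hq
      exact ⟨q.1, hq.1, q.2, hq.2, he.symm⟩
    · rintro ⟨q, hq, x, hx, he⟩
      exact ⟨(q, x), Finset.mem_product.2 ⟨hq, hx⟩, he.symm⟩
  have hFA : ∀ I : Finset ℕ, I ∈ FA ↔
      (I ⊆ Finset.Icc 1 m ∧ I.card = r ∧ m - r - 1 ≤ (I.sort (· ≤ ·)).getD 0 0 ∧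
        (I.sort (· ≤ ·)).getD 1 0 ≤ m - r ∧ (I.sort (· ≤ ·)).getD 2 0 ≤ m - r + 2) := by
    intro I
    rw [structA r m hr hm I, hFAdef, Finset.mem_image]
    constructor
    · rintro ⟨K, hK, he⟩
      rw [Finset.mem_erase, Finset.mem_powersetCard] at hK
      exact ⟨K, hK.2.1, hK.2.2, hK.1, he.symm⟩
    · rintro ⟨K, h1, h2, h3, he⟩
      exact ⟨K, Finset.mem_erase.2 ⟨h3, Finset.mem_powersetCard.2 ⟨h1, h2⟩⟩, he.symm⟩
  have hunion : (Finset.powersetCard r (Finset.Icc 1 m)).filter (fun I => ¬ GoodP m I)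
      = FC ∪ FB ∪ FA := by
    ext I
    rw [Finset.mem_filter, Finset.mem_powersetCard, Finset.mem_union, Finset.mem_union,
      hFC I, hFB I, hFA I]
    constructor
    · rintro ⟨⟨hsub, hcard⟩, hbad⟩
      rw [good_iff_G r m hr hm I hsub hcard] at hbad
      by_cases h1 : m - r + 3 ≤ (I.sort (· ≤ ·)).getD 2 0
      · exact Or.inl (Or.inl ⟨hsub, hcard, h1⟩)
      · by_cases h2 : m - r + 1 ≤ (I.sort (· ≤ ·)).getD 1 0
        · exact Or.inl (Or.inr ⟨hsub, hcard, h2, by omega⟩)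
        · exact Or.inr ⟨hsub, hcard, by omega, by omega, by omega⟩
    · rintro ((⟨hsub, hcard, h⟩ | ⟨hsub, hcard, h1, h2⟩) | ⟨hsub, hcard, h1, h2, h3⟩) <;>
        refine ⟨⟨hsub, hcard⟩, ?_⟩ <;>
        rw [good_iff_G r m hr hm I hsub hcard] <;> omega
  have hd1 : Disjoint FC FB := by
    rw [Finset.disjoint_left]
    intro I hI1 hI2
    rw [hFC I] at hI1
    rw [hFB I] at hI2
    omega
  have hd2 : Disjoint (FC ∪ FB) FA := by
    rw [Finset.disjoint_left]
    intro I hI1 hI2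
    rw [hFA I] at hI2
    rcases Finset.mem_union.1 hI1 with h | h
    · rw [hFC I] at h; omega
    · rw [hFB I] at h; omega
  have cardFC : FC.card = (m - r + 2).choose 2 := by
    rw [hFCdef, Finset.card_image_of_injOn, Finset.card_powersetCard]
    · congr 1
      rw [Nat.card_Icc]
      omega
    · intro K1 h1 K2 h2 heq
      rw [Finset.mem_coe, Finset.mem_powersetCard] at h1 h2
      have hb1 : ∀ x ∈ K1, x ≤ m - r + 2 := fun x hx => (Finset.mem_Icc.1 (h1.1 hx)).2
      have hb2 : ∀ x ∈ K2, x ≤ m - r + 2 := fun x hx => (Finset.mem_Icc.1 (h2.1 hx)).2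
      have heq' : K1 ∪ Finset.Icc (m - r + 3) m = K2 ∪ Finset.Icc (m - r + 3) m := heq
      ext x
      constructor
      · intro hx
        have : x ∈ K2 ∪ Finset.Icc (m - r + 3) m := heq' ▸ Finset.mem_union_left _ hx
        rcases Finset.mem_union.1 this with h | h
        · exact h
        · rw [Finset.mem_Icc] at h
          have := hb1 x hx
          omega
      · intro hx
        have : x ∈ K1 ∪ Finset.Icc (m - r + 3) m := heq'.symm ▸ Finset.mem_union_left _ hx
        rcases Finset.mem_union.1 this with h | h
        · exact h
        · rw [Finset.mem_Icc] at h
          have := hb2 x hx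
          omega
  have cardFB : FB.card = (m - r) * (r - 2) := by
    rw [hFBdef, Finset.card_image_of_injOn, Finset.card_product]
    · rw [Nat.card_Icc, Nat.card_Icc]
      congr 1 <;> omega
    · rintro ⟨q1, x1⟩ hp1 ⟨q2, x2⟩ hp2 heq
      rw [Finset.mem_coe, Finset.mem_product, Finset.mem_Icc, Finset.mem_Icc] at hp1 hp2
      simp only at hp1 hp2
      have heq' : insert q1 (Finset.Icc (m - r + 1) m \ {x1})
          = insert q2 (Finset.Icc (m - r + 1) m \ {x2}) := heq
      have hq : q1 = q2 := by
        have h1 : q1 ∈ insert q2 (Finset.Icc (m - r + 1) m \ {x2}) :=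
          heq' ▸ Finset.mem_insert_self q1 _
        rcases Finset.mem_insert.1 h1 with h | h
        · exact h
        · rw [Finset.mem_sdiff, Finset.mem_Icc] at h
          omega
      have hx : x1 = x2 := by
        by_contra hne
        have hmem : x2 ∈ insert q1 (Finset.Icc (m - r + 1) m \ {x1}) := by
          apply Finset.mem_insert_of_mem
          rw [Finset.mem_sdiff, Finset.mem_Icc, Finset.mem_singleton]
          exact ⟨⟨by omega, by omega⟩, fun h => hne h.symm⟩
        have h2 : x2 ∈ insert q2 (Finset.Icc (m - r + 1) m \ {x2}) := heq' ▸ hmem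
        rcases Finset.mem_insert.1 h2 with h | h
        · omega
        · rw [Finset.mem_sdiff, Finset.mem_singleton] at h
          exact h.2 rfl
      simp only [Prod.mk.injEq]
      exact ⟨hq, hx⟩
  have hpairmem : ({m - r + 1, m - r + 2} : Finset ℕ)
      ∈ Finset.powersetCard 2 (Finset.Icc (m - r + 1) m) := by
    rw [Finset.mem_powersetCard]
    constructor
    · intro z hz
      simp only [Finset.mem_insert, Finset.mem_singleton] at hz
      rw [Finset.mem_Icc]
      rcases hz with rfl | rfl <;> omega
    · rw [Finset.card_insert_of_notMem (by simp), Finset.card_singleton]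
  have cardFA : FA.card = r.choose 2 - 1 := by
    rw [hFAdef, Finset.card_image_of_injOn, Finset.card_erase_of_mem hpairmem,
      Finset.card_powersetCard, Nat.card_Icc]
    · congr 2
      omega
    · intro K1 h1 K2 h2 heq
      rw [Finset.mem_coe, Finset.mem_erase, Finset.mem_powersetCard] at h1 h2
      have hs1 : K1 ⊆ Finset.Icc (m - r - 1) m := by
        intro z hz
        have := Finset.mem_Icc.1 (h1.2.1 hz)
        rw [Finset.mem_Icc]
        omega
      have hs2 : K2 ⊆ Finset.Icc (m - r - 1) m := by
        intro z hz
        have := Finset.mem_Icc.1 (h2.2.1 hz)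
        rw [Finset.mem_Icc]
        omega
      have heq' : Finset.Icc (m - r - 1) m \ K1 = Finset.Icc (m - r - 1) m \ K2 := heq
      calc K1 = Finset.Icc (m - r - 1) m ∩ K1 := (Finset.inter_eq_right.2 hs1).symm
        _ = Finset.Icc (m - r - 1) m \ (Finset.Icc (m - r - 1) m \ K1) :=
            (Finset.sdiff_sdiff_self_left _ _).symm
        _ = Finset.Icc (m - r - 1) m \ (Finset.Icc (m - r - 1) m \ K2) := by rw [heq']
        _ = Finset.Icc (m - r - 1) m ∩ K2 := Finset.sdiff_sdiff_self_left _ _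
        _ = K2 := Finset.inter_eq_right.2 hs2
  rw [hunion, Finset.card_union_of_disjoint hd2, Finset.card_union_of_disjoint hd1,
    cardFC, cardFB, cardFA]
  have c1 := two_mul_choose_two (m - r + 2)
  have c2 := two_mul_choose_two r
  have c3 := two_mul_choose_two m
  have hge : 1 ≤ r.choose 2 := Nat.choose_pos (by omega)
  have e1 : m - r + 2 - 1 = m - r + 1 := by omega
  rw [e1] at c1
  zify [hge, show 1 ≤ m by omega, show 1 ≤ r by omega, show 2 ≤ r by omega,
    show r ≤ m by omega] at c1 c2 c3 ⊢
  have key : (2:ℤ) * (((m - r + 2).choose 2 : ℤ) + ((m:ℤ) - r) * ((r:ℤ) - 2)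
      + ((r.choose 2 : ℤ) - 1)) = 2 * (m.choose 2 : ℤ) := by
    linear_combination c1 + c2 - c3
  linarith

lemma GoodP_def (m : ℕ) (I : Finset ℕ) : GoodP m I ↔
    ∃ d e f : ℕ,
      d ∈ Finset.Icc 1 m \ I ∧ e ∈ Finset.Icc 1 m \ I ∧ f ∈ Finset.Icc 1 m \ I ∧
      d < e ∧ e < f ∧
      (I.sort (· ≤ ·)).getD 0 0 < d ∧
      (I.sort (· ≤ ·)).getD 1 0 < e ∧
      (I.sort (· ≤ ·)).getD 2 0 < f := Iff.rfl

lemma p_empty (r : ℕ) (hr : 3 ≤ r) :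
    {I : Finset ℕ | I ⊆ Finset.Icc 1 (r+2) ∧ I.card = r ∧ GoodP (r+2) I} = ∅ := by
  rw [Set.eq_empty_iff_forall_notMem]
  rintro I ⟨hsub, hcard, hgood⟩
  rw [GoodP_def] at hgood
  obtain ⟨d, e, f, hd, he, hf, hde, hef, -, -, -⟩ := hgood
  have hsubT : ({d, e, f} : Finset ℕ) ⊆ Finset.Icc 1 (r+2) \ I := by
    intro x hx
    simp only [Finset.mem_insert, Finset.mem_singleton] at hx
    rcases hx with rfl | rfl | rfl
    · exact hd
    · exact he
    · exact hf
  have hc := Finset.card_le_card hsubT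
  rw [card_triple d e f hde hef, Finset.card_sdiff_of_subset hsub, Nat.card_Icc, hcard] at hc
  omega

open scoped Classical in
lemma p_closed (r m : ℕ) (hr : 3 ≤ r) (hm : r + 3 ≤ m) :
    {I : Finset ℕ | I ⊆ Finset.Icc 1 m ∧ I.card = r ∧ GoodP m I}.ncard + m.choose 2
      = m.choose r := by
  have hset : {I : Finset ℕ | I ⊆ Finset.Icc 1 m ∧ I.card = r ∧ GoodP m I}
      = ↑((Finset.powersetCard r (Finset.Icc 1 m)).filter (fun I => GoodP m I)) := by
    ext I
    simp only [Set.mem_setOf_eq, Finset.coe_filter, Finset.mem_powersetCard]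
    tauto
  rw [hset, Set.ncard_coe_finset]
  have hsum := Finset.card_filter_add_card_filter_not
    (s := Finset.powersetCard r (Finset.Icc 1 m)) (p := fun I => GoodP m I)
  have hbad := bad_card r m hr hm
  rw [Finset.card_powersetCard, Nat.card_Icc] at hsum
  have e1 : m + 1 - 1 = m := by omega
  rw [e1] at hsum
  omega

open scoped BigOperators

theorem stmt_13 (r : ℕ) (hr : 3 ≤ r) (p : ℕ → ℕ)
    (hp : ∀ m : ℕ, p m = Set.ncard
      {I : Finset ℕ | I ⊆ Finset.Icc 1 m ∧ I.card = r ∧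
        ∃ d e f : ℕ,
          d ∈ Finset.Icc 1 m \ I ∧ e ∈ Finset.Icc 1 m \ I ∧ f ∈ Finset.Icc 1 m \ I ∧
          d < e ∧ e < f ∧
          (I.sort (· ≤ ·)).getD 0 0 < d ∧
          (I.sort (· ≤ ·)).getD 1 0 < e ∧
          (I.sort (· ≤ ·)).getD 2 0 < f}) :
    p (r + 2) = 0 ∧
    (∀ m : ℕ, r + 3 ≤ m →
      (p m : ℤ) = (∑ i ∈ Finset.Icc 1 (m - r), (i : ℤ) * (Nat.choose (m - 2 - i) (r - 3) : ℤ))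
        - ((r : ℤ) - 2) + (p (m - 1) : ℤ)) ∧
    (∀ m : ℕ, r + 2 ≤ m →
      (p m : ℤ) = (Nat.choose m r : ℤ) - (Nat.choose m 2 : ℤ)) := by
  classical
  have hset : ∀ n : ℕ, {I : Finset ℕ | I ⊆ Finset.Icc 1 n ∧ I.card = r ∧
      ∃ d e f : ℕ,
        d ∈ Finset.Icc 1 n \ I ∧ e ∈ Finset.Icc 1 n \ I ∧ f ∈ Finset.Icc 1 n \ I ∧
        d < e ∧ e < f ∧
        (I.sort (· ≤ ·)).getD 0 0 < d ∧
        (I.sort (· ≤ ·)).getD 1 0 < e ∧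
        (I.sort (· ≤ ·)).getD 2 0 < f}
      = {I : Finset ℕ | I ⊆ Finset.Icc 1 n ∧ I.card = r ∧ GoodP n I} := fun n => rfl
  have hzero : p (r + 2) = 0 := by
    rw [hp (r+2), hset (r+2), p_empty r hr, Set.ncard_empty]
  have hkey : ∀ m : ℕ, r + 2 ≤ m → p m + m.choose 2 = m.choose r := by
    intro m hm
    rcases eq_or_lt_of_le hm with heq | hlt
    · subst heq
      rw [hzero]
      have hch := Nat.choose_symm (show r ≤ r + 2 by omega)
      have e : r + 2 - r = 2 := by omega
      rw [e] at hch
      omega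
    · rw [hp m, hset m]
      exact p_closed r m hr (by omega)
  have hclosed : ∀ m : ℕ, r + 2 ≤ m →
      (p m : ℤ) = (Nat.choose m r : ℤ) - (Nat.choose m 2 : ℤ) := by
    intro m hm
    have h := hkey m hm
    have h' : ((p m : ℕ) : ℤ) + ((m.choose 2 : ℕ) : ℤ) = ((m.choose r : ℕ) : ℤ) := by
      exact_mod_cast congrArg (fun x : ℕ => (x : ℤ)) h
    linarith
  refine ⟨hzero, ?_, hclosed⟩
  intro m hm
  have h1 := hclosed m (by omega)
  have h2 := hclosed (m-1) (by omega)
  have hsum := sum_id r hr (m - r) (by omega)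
  have hrw : ∀ i ∈ Finset.Icc 1 (m - r),
      (i : ℤ) * ((r + (m - r) - 2 - i).choose (r - 3) : ℤ)
        = (i : ℤ) * ((m - 2 - i).choose (r - 3) : ℤ) := by
    intro i hi
    rw [show r + (m - r) - 2 - i = m - 2 - i from by omega]
  rw [Finset.sum_congr rfl hrw, show r + (m - r) - 1 = m - 1 from by omega] at hsum
  have hp1 := Nat.choose_succ_succ (m-1) (r-1)
  simp only [Nat.succ_eq_add_one] at hp1
  rw [show m - 1 + 1 = m from by omega, show r - 1 + 1 = r from by omega] at hp1
  have hp2 := Nat.choose_succ_succ (m-1) 1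
  simp only [Nat.succ_eq_add_one] at hp2
  rw [show m - 1 + 1 = m from by omega, Nat.choose_one_right] at hp2
  have hp1' : (Nat.choose m r : ℤ)
      = (Nat.choose (m-1) (r-1) : ℤ) + (Nat.choose (m-1) r : ℤ) := by exact_mod_cast hp1
  have hp2' : (Nat.choose m 2 : ℤ) = ((m : ℤ) - 1) + (Nat.choose (m-1) 2 : ℤ) := by
    have : (Nat.choose m 2 : ℤ) = ((m - 1 : ℕ) : ℤ) + (Nat.choose (m-1) 2 : ℤ) := by
      exact_mod_cast hp2
    rw [this]
    push_cast [Nat.cast_sub (show 1 ≤ m by omega)]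
    ring
  have hmr : ((m - r : ℕ) : ℤ) = (m : ℤ) - (r : ℤ) := by
    push_cast [Nat.cast_sub (show r ≤ m by omega)]
    ring
  rw [hmr] at hsum
  rw [h1, h2, hsum]
  linarith
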